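/- The maximum bottleneck capacity between any two vertices of a finite weighted graph is achieved on a maximum spanning forest: for all u, v, the bottleneck capacity in G equals the bottleneck capacity in any maximum-weight spanning forest of G. -/

import Mathlib

open SimpleGraph

private lemma aux_reroute {V : Type*} {Γ K : SimpleGraph V}
    (h : ∀ x y : V, Γ.Adj x y → K.Reachable x y) {u v : V} (huv : Γ.Reachable u v) :
    K.Reachable u v := by
  obtain ⟨p⟩ := huv
  induction p with
  | nil => exact Reachable.refl _
  | cons ha _ ih => exact (h _ _ ha).trans ih

private lemma aux_cross {V : Type*} {Γ : SimpleGraph V} (P : V → Prop) :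
    ∀ {a b : V} (q : Γ.Walk a b), P a → ¬ P b →
    ∃ x y : V, s(x, y) ∈ q.edges ∧ P x ∧ ¬ P y := by
  intro a b q
  induction q with
  | nil => intro h1 h2; exact absurd h1 h2
  | @cons a c b ha p ih =>
    intro h1 h2
    by_cases hc : P c
    · obtain ⟨x, y, hm, hx, hy⟩ := ih hc h2
      exact ⟨x, y, by simp [hm], hx, hy⟩
    · exact ⟨a, c, by simp, h1, hc⟩

private lemma aux_del {V : Type*} {Γ Γ' : SimpleGraph V} {x y : V}
    (hΓ' : ∀ u v : V, Γ.Adj u v → s(u, v) ≠ s(x, y) → Γ'.Adj u v) :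
    ∀ {u v : V}, Γ.Walk u v →
      Γ'.Reachable u v ∨ (Γ'.Reachable u x ∧ Γ'.Reachable y v) ∨
        (Γ'.Reachable u y ∧ Γ'.Reachable x v) := by
  intro u v p
  induction p with
  | nil => exact Or.inl (Reachable.refl _)
  | @cons u c v ha p ih =>
    by_cases he : s(u, c) = s(x, y)
    · rw [Sym2.eq_iff] at he
      rcases he with ⟨rfl, rfl⟩ | ⟨rfl, rfl⟩
      · rcases ih with h | ⟨h1, h2⟩ | ⟨h1, h2⟩
        · exact Or.inr (Or.inl ⟨Reachable.refl _, h⟩)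
        · exact Or.inr (Or.inl ⟨Reachable.refl _, h2⟩)
        · exact Or.inl h2
      · rcases ih with h | ⟨h1, h2⟩ | ⟨h1, h2⟩
        · exact Or.inr (Or.inr ⟨Reachable.refl _, h⟩)
        · exact Or.inl h2
        · exact Or.inr (Or.inr ⟨Reachable.refl _, h2⟩)
    · have hadj : Γ'.Adj u c := hΓ' _ _ ha he
      rcases ih with h | ⟨h1, h2⟩ | ⟨h1, h2⟩
      · exact Or.inl (hadj.reachable.trans h)
      · exact Or.inr (Or.inl ⟨hadj.reachable.trans h1, h2⟩)
      · exact Or.inr (Or.inr ⟨hadj.reachable.trans h1, h2⟩)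

private lemma aux_key {V : Type*} [Fintype V] [DecidableEq V] (G : SimpleGraph V)
    (w : Sym2 V → ℝ) (F : Finset (Sym2 V))
    (hFsub : (F : Set (Sym2 V)) ⊆ G.edgeSet)
    (hFacyclic : (SimpleGraph.fromEdgeSet (F : Set (Sym2 V))).IsAcyclic)
    (hFspanning : ∀ u v : V, G.Reachable u v →
      (SimpleGraph.fromEdgeSet (F : Set (Sym2 V))).Reachable u v)
    (hFmax : ∀ F' : Finset (Sym2 V), (F' : Set (Sym2 V)) ⊆ G.edgeSet →
      (SimpleGraph.fromEdgeSet (F' : Set (Sym2 V))).IsAcyclic →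
      (∀ u v : V, G.Reachable u v →
        (SimpleGraph.fromEdgeSet (F' : Set (Sym2 V))).Reachable u v) →
      ∑ e ∈ F', w e ≤ ∑ e ∈ F, w e)
    (a b : V) (hab : G.Adj a b) :
    (SimpleGraph.fromEdgeSet ((F.filter (fun g => w s(a, b) ≤ w g) : Finset (Sym2 V)) :
      Set (Sym2 V))).Reachable a b := by
  classical
  by_contra hR
  set e : Sym2 V := s(a, b) with he_def
  set Fe : Finset (Sym2 V) := F.filter (fun g => w e ≤ w g) with hFe_def
  set Γ : SimpleGraph V := SimpleGraph.fromEdgeSet (F : Set (Sym2 V)) with hΓ_def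
  set H : SimpleGraph V := SimpleGraph.fromEdgeSet (Fe : Set (Sym2 V)) with hH_def
  have hab_ne : a ≠ b := hab.ne
  -- e ∉ F
  have heF : e ∉ F := by
    intro h
    exact hR ⟨Walk.cons (by
      rw [fromEdgeSet_adj]
      exact ⟨Finset.mem_coe.mpr (Finset.mem_filter.mpr ⟨h, le_refl _⟩), hab_ne⟩) Walk.nil⟩
  -- get a path q from a to b in Γ
  obtain ⟨q₀⟩ := hFspanning a b hab.reachable
  set q : Γ.Walk a b := q₀.toPath.1 with hq_def
  have hq_path : q.IsPath := q₀.toPath.2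
  -- crossing edge
  have hPa : H.Reachable a a := Reachable.refl _
  obtain ⟨x, y, hfq, hPx, hPy⟩ := aux_cross (fun z => H.Reachable a z) q hPa hR
  set f : Sym2 V := s(x, y) with hf_def
  have hfΓ : Γ.Adj x y := q.adj_of_mem_edges hfq
  have hxy_ne : x ≠ y := hfΓ.ne
  have hfF : f ∈ F := by
    have := q.edges_subset_edgeSet hfq
    rw [hΓ_def, edgeSet_fromEdgeSet] at this
    exact this.1
  -- w f < w e
  have hwf : w f < w e := by
    by_contra h
    push_neg at h
    have hfFe : f ∈ Fe := Finset.mem_filter.mpr ⟨hfF, h⟩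
    exact hPy (hPx.trans (Adj.reachable (by rw [hH_def, fromEdgeSet_adj]; exact ⟨hfFe, hxy_ne⟩)))
  have hef : e ≠ f := by
    intro h; exact heF (h ▸ hfF)
  set Γ' : SimpleGraph V := SimpleGraph.fromEdgeSet ((F.erase f : Finset (Sym2 V)) : Set (Sym2 V))
    with hΓ'_def
  -- H ≤ Γ'
  have hHΓ' : H ≤ Γ' := by
    apply fromEdgeSet_mono
    intro g hg
    simp only [Finset.coe_filter, Set.mem_setOf_eq, hFe_def] at hg
    simp only [Finset.coe_erase, Set.mem_diff, Set.mem_singleton_iff]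
    refine ⟨hg.1, ?_⟩
    intro h
    rw [h] at hg
    exact absurd hg.2 (not_le.mpr hwf)
  -- Claim B : ¬ Γ'.Reachable a b
  have hB : ¬ Γ'.Reachable a b := by
    rintro ⟨p₀⟩
    set p' : Γ'.Walk a b := p₀.toPath.1 with hp'_def
    have hp'_path : p'.IsPath := p₀.toPath.2
    have hsub : ∀ g ∈ p'.edges, g ∈ Γ.edgeSet := by
      intro g hg
      have := p'.edges_subset_edgeSet hg
      rw [hΓ'_def, edgeSet_fromEdgeSet] at this
      rw [hΓ_def, edgeSet_fromEdgeSet]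
      exact ⟨Finset.erase_subset f F (by exact_mod_cast this.1), this.2⟩
    set p'' : Γ.Walk a b := p'.transfer Γ hsub with hp''_def
    have hp''_path : p''.IsPath := hp'_path.transfer hsub
    have hunique := isAcyclic_iff_path_unique.mp hFacyclic ⟨p'', hp''_path⟩ ⟨q, hq_path⟩
    have heq : p'' = q := congrArg Subtype.val hunique
    have hedges : p''.edges = q.edges := by rw [heq]
    have hfp'' : f ∈ p''.edges := hedges ▸ hfq
    rw [hp''_def, Walk.edges_transfer] at hfp''
    have := p'.edges_subset_edgeSet hfp''
    rw [hΓ'_def, edgeSet_fromEdgeSet] at this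
    have : f ∈ F.erase f := by exact_mod_cast this.1
    simp at this
  -- apply aux_del to q
  have hdel := aux_del (Γ := Γ) (Γ' := Γ') (x := x) (y := y)
    (by
      intro u v hadj hne
      rw [hΓ'_def, fromEdgeSet_adj]
      rw [hΓ_def, fromEdgeSet_adj] at hadj
      refine ⟨?_, hadj.2⟩
      simp only [Finset.coe_erase, Set.mem_diff, Set.mem_singleton_iff]
      exact ⟨by exact_mod_cast hadj.1, hne⟩) q
  have hax : Γ'.Reachable a x := aux_reroute (fun u v h => ((hHΓ' h).reachable)) hPx
  have hyb : Γ'.Reachable y b := by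
    rcases hdel with h | ⟨h1, h2⟩ | ⟨h1, h2⟩
    · exact absurd h hB
    · exact h2
    · exact ((h1.symm.trans hax).trans h2)
  -- the exchanged forest
  set F' : Finset (Sym2 V) := insert e (F.erase f) with hF'_def
  set K : SimpleGraph V := SimpleGraph.fromEdgeSet (F' : Set (Sym2 V)) with hK_def
  have hΓ'K : Γ' ≤ K := by
    apply fromEdgeSet_mono
    rw [hF'_def]
    push_cast
    exact Set.subset_insert _ _
  have hKab : K.Adj a b := by
    rw [hK_def, fromEdgeSet_adj]
    exact ⟨by simp [hF'_def, he_def], hab_ne⟩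
  -- F' ⊆ edgeSet
  have hF'sub : (F' : Set (Sym2 V)) ⊆ G.edgeSet := by
    intro g hg
    simp only [hF'_def, Finset.coe_insert, Set.mem_insert_iff] at hg
    rcases hg with rfl | hg
    · exact (G.mem_edgeSet).mpr hab
    · exact hFsub (by exact_mod_cast (Finset.erase_subset f F (by exact_mod_cast hg)))
  -- spanning
  have hF'span : ∀ u v : V, G.Reachable u v → K.Reachable u v := by
    intro u v huv
    refine aux_reroute ?_ (hFspanning u v huv)
    intro u' v' hadj
    rw [hΓ_def, fromEdgeSet_adj] at hadj
    by_cases hne : s(u', v') = f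
    · rw [hf_def, Sym2.eq_iff] at hne
      have hxyK : K.Reachable x y :=
        ((hax.mono hΓ'K).symm.trans (hKab.reachable)).trans (hyb.mono hΓ'K).symm
      rcases hne with ⟨rfl, rfl⟩ | ⟨rfl, rfl⟩
      · exact hxyK
      · exact hxyK.symm
    · refine Adj.reachable ?_
      rw [hK_def, fromEdgeSet_adj]
      refine ⟨?_, hadj.2⟩
      simp only [hF'_def, Finset.coe_insert, Set.mem_insert_iff, Finset.coe_erase,
        Set.mem_diff, Set.mem_singleton_iff]
      exact Or.inr ⟨by exact_mod_cast hadj.1, hne⟩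
  -- acyclicity
  have hF'acyclic : K.IsAcyclic := by
    intro v c hc
    by_cases he : e ∈ c.edges
    · have := (adj_and_reachable_delete_edges_iff_exists_cycle (G := K) (v := a) (w := b)).mpr
        ⟨v, c, hc, he⟩
      have hreach : (K \ SimpleGraph.fromEdgeSet {e}).Reachable a b := this.2
      refine hB (hreach.mono ?_)
      intro u' v' hadj
      rcases hadj with ⟨h1, h2⟩
      rw [hK_def, fromEdgeSet_adj] at h1
      rw [fromEdgeSet_adj] at h2
      rw [hΓ'_def, fromEdgeSet_adj]
      refine ⟨?_, h1.2⟩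
      have hne : s(u', v') ≠ e := by
        intro h; exact h2 ⟨by simp [h], h1.2⟩
      have h1' := h1.1
      simp only [hF'_def, Finset.coe_insert, Set.mem_insert_iff] at h1'
      rcases h1' with h | h
      · exact absurd h hne
      · exact h
    · -- transfer c into Γ
      have hsub : ∀ g ∈ c.edges, g ∈ Γ.edgeSet := by
        intro g hg
        have hne : g ≠ e := fun h => he (h ▸ hg)
        have := c.edges_subset_edgeSet hg
        rw [hK_def, edgeSet_fromEdgeSet] at this
        rw [hΓ_def, edgeSet_fromEdgeSet]
        refine ⟨?_, this.2⟩
        have h1 := this.1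
        simp only [hF'_def, Finset.coe_insert, Set.mem_insert_iff] at h1
        rcases h1 with h | h
        · exact absurd h hne
        · exact_mod_cast Finset.erase_subset f F (by exact_mod_cast h)
      exact hFacyclic (c.transfer _ hsub) (hc.transfer hsub)
  -- weight contradiction
  have hsum := hFmax F' hF'sub hF'acyclic hF'span
  have heF' : e ∉ F.erase f := fun h => heF (Finset.erase_subset f F h)
  rw [hF'_def, Finset.sum_insert heF'] at hsum
  have hsum2 : ∑ g ∈ F.erase f, w g + w f = ∑ g ∈ F, w g := Finset.sum_erase_add F w hfF
  linarith

theorem stmt_14 {V : Type*} [Fintype V] [DecidableEq V] (G : SimpleGraph V)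
    [DecidableRel G.Adj] (w : Sym2 V → ℝ) (F : Finset (Sym2 V))
    (hFsub : (F : Set (Sym2 V)) ⊆ G.edgeSet)
    (hFacyclic : (SimpleGraph.fromEdgeSet (F : Set (Sym2 V))).IsAcyclic)
    (hFspanning : ∀ u v : V, G.Reachable u v →
      (SimpleGraph.fromEdgeSet (F : Set (Sym2 V))).Reachable u v)
    (hFmax : ∀ F' : Finset (Sym2 V), (F' : Set (Sym2 V)) ⊆ G.edgeSet →
      (SimpleGraph.fromEdgeSet (F' : Set (Sym2 V))).IsAcyclic →
      (∀ u v : V, G.Reachable u v →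
        (SimpleGraph.fromEdgeSet (F' : Set (Sym2 V))).Reachable u v) →
      ∑ e ∈ F', w e ≤ ∑ e ∈ F, w e) :
    ∀ (u v : V) (r : ℝ),
      (∃ p : G.Walk u v, ∀ e ∈ p.edges, r ≤ w e) ↔
      (∃ p : (SimpleGraph.fromEdgeSet (F : Set (Sym2 V))).Walk u v,
        ∀ e ∈ p.edges, r ≤ w e) := by
  classical
  intro u v r
  constructor
  · rintro ⟨p, hp⟩
    set Fr : Finset (Sym2 V) := F.filter (fun g => r ≤ w g) with hFr_def
    have hreach : (SimpleGraph.fromEdgeSet (Fr : Set (Sym2 V))).Reachable u v := by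
      induction p with
      | nil => exact Reachable.refl _
      | @cons u c v' ha p ih =>
        have hhead : r ≤ w s(u, c) := hp _ (by simp)
        have hkey := aux_key G w F hFsub hFacyclic hFspanning hFmax u c ha
        have hmono : SimpleGraph.fromEdgeSet
            ((F.filter (fun g => w s(u, c) ≤ w g) : Finset (Sym2 V)) : Set (Sym2 V)) ≤
            SimpleGraph.fromEdgeSet (Fr : Set (Sym2 V)) := by
          apply fromEdgeSet_mono
          intro g hg
          have hg' := Finset.mem_filter.mp (Finset.mem_coe.mp hg)
          exact Finset.mem_coe.mpr (Finset.mem_filter.mpr ⟨hg'.1, le_trans hhead hg'.2⟩)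
        exact (hkey.mono hmono).trans (ih (fun g hg => hp _ (by simp [hg])))
    obtain ⟨p₀⟩ := hreach
    have hsub : ∀ g ∈ p₀.edges, g ∈ (SimpleGraph.fromEdgeSet (F : Set (Sym2 V))).edgeSet := by
      intro g hg
      have := p₀.edges_subset_edgeSet hg
      rw [edgeSet_fromEdgeSet] at this ⊢
      refine ⟨?_, this.2⟩
      have h1 : g ∈ Fr := by exact_mod_cast this.1
      rw [hFr_def, Finset.mem_filter] at h1
      exact_mod_cast h1.1
    refine ⟨p₀.transfer _ hsub, ?_⟩
    intro g hg
    rw [Walk.edges_transfer] at hg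
    have := p₀.edges_subset_edgeSet hg
    rw [edgeSet_fromEdgeSet] at this
    have h1 : g ∈ Fr := by exact_mod_cast this.1
    rw [hFr_def, Finset.mem_filter] at h1
    exact h1.2
  · rintro ⟨p, hp⟩
    have hsub : ∀ g ∈ p.edges, g ∈ G.edgeSet := by
      intro g hg
      have := p.edges_subset_edgeSet hg
      rw [edgeSet_fromEdgeSet] at this
      exact hFsub this.1
    refine ⟨p.transfer G hsub, ?_⟩
    intro g hg
    rw [Walk.edges_transfer] at hg
    exact hp g hg
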